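/- The function f is continuous on (−μ, 1−μ), f(x) → −∞ as x → −μ from the right, and f(x) → +∞ as x → (1−μ) from the left. Consequently there exists a collinear equilibrium point x₁ ∈ (−μ, 1−μ) with f(x₁) = 0. -/

import Mathlib

open Set Filter Topology

/-- Collinear equilibrium function of the generalized photogravitational
Chermnykh problem. -/
noncomputable def fcol (μ q₁ A₂ Mb T n x : ℝ) : ℝ :=
  n ^ 2 * x
    - (1 - μ) * q₁ * (x + μ) / |x + μ| ^ 3
    - μ * (x + μ - 1) / |x + μ - 1| ^ 3
    - (3 / 2) * μ * A₂ * (x + μ - 1) / |x + μ - 1| ^ 5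
    - Mb * x / (x ^ 2 + T ^ 2) ^ ((3 : ℝ) / 2)

/-- On `(-μ, 1-μ)` the function `f` is continuous, tends to `-∞` as `x → -μ⁺` and to
`+∞` as `x → (1-μ)⁻`; consequently there is a collinear equilibrium point
`x₁ ∈ (-μ, 1-μ)`. -/
theorem collinear_point_middle
    (μ q₁ A₂ Mb T n : ℝ)
    (hμ0 : 0 < μ) (hμ1 : μ < 1 / 2) (hq0 : 0 < q₁) (hq1 : q₁ ≤ 1)
    (hA : 0 ≤ A₂) (hM : 0 ≤ Mb) (hT : 0 < T) (hn : 0 < n) :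
    ContinuousOn (fcol μ q₁ A₂ Mb T n) (Set.Ioo (-μ) (1 - μ)) ∧
    Filter.Tendsto (fcol μ q₁ A₂ Mb T n)
      (nhdsWithin (-μ) (Set.Ioi (-μ))) Filter.atBot ∧
    Filter.Tendsto (fcol μ q₁ A₂ Mb T n)
      (nhdsWithin (1 - μ) (Set.Iio (1 - μ))) Filter.atTop ∧
    ∃ x₁ ∈ Set.Ioo (-μ) (1 - μ), fcol μ q₁ A₂ Mb T n x₁ = 0 := by
  have hμ2 : μ < 1 := by linarith
  -- last term is continuous everywhere
  have hcT : Continuous fun x : ℝ => Mb * x / (x ^ 2 + T ^ 2) ^ ((3 : ℝ) / 2) := by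
    apply Continuous.div (continuous_const.mul continuous_id)
    · exact ((continuous_pow 2).add continuous_const).rpow_const fun x => Or.inr (by norm_num)
    · intro x
      exact (Real.rpow_pos_of_pos (by positivity) _).ne'
  -- Continuity on the interval
  have hcont : ContinuousOn (fcol μ q₁ A₂ Mb T n) (Set.Ioo (-μ) (1 - μ)) := by
    have c1 : Continuous fun x : ℝ => n ^ 2 * x := continuous_const.mul continuous_id
    refine (((c1.continuousOn.sub ?_).sub ?_).sub ?_).sub hcT.continuousOn
    · refine ContinuousOn.div ?_ ?_ ?_
      · exact (continuous_const.mul (continuous_id.add continuous_const)).continuousOn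
      · exact ((continuous_id.add continuous_const).abs.pow 3).continuousOn
      · intro x hx
        have hx0 : (0:ℝ) < x + μ := by have := hx.1; linarith
        exact pow_ne_zero _ (abs_ne_zero.2 hx0.ne')
    · refine ContinuousOn.div ?_ ?_ ?_
      · exact (continuous_const.mul ((continuous_id.add continuous_const).sub
          continuous_const)).continuousOn
      · exact (((continuous_id.add continuous_const).sub continuous_const).abs.pow 3).continuousOn
      · intro x hx
        have hx0 : x + μ - 1 < 0 := by have := hx.2; linarith
        exact pow_ne_zero _ (abs_ne_zero.2 hx0.ne)
    · refine ContinuousOn.div ?_ ?_ ?_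
      · exact (continuous_const.mul ((continuous_id.add continuous_const).sub
          continuous_const)).continuousOn
      · exact (((continuous_id.add continuous_const).sub continuous_const).abs.pow 5).continuousOn
      · intro x hx
        have hx0 : x + μ - 1 < 0 := by have := hx.2; linarith
        exact pow_ne_zero _ (abs_ne_zero.2 hx0.ne)
  -- auxiliary regular parts
  set g₁ : ℝ → ℝ := fun x => n ^ 2 * x - μ * (x + μ - 1) / |x + μ - 1| ^ 3
      - 3 / 2 * μ * A₂ * (x + μ - 1) / |x + μ - 1| ^ 5
      - Mb * x / (x ^ 2 + T ^ 2) ^ ((3 : ℝ) / 2) with hg1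
  set g₂ : ℝ → ℝ := fun x => n ^ 2 * x - (1 - μ) * q₁ * (x + μ) / |x + μ| ^ 3
      - Mb * x / (x ^ 2 + T ^ 2) ^ ((3 : ℝ) / 2) with hg2
  have hden1 : |(-μ : ℝ) + μ - 1| ≠ 0 := by
    rw [show -μ + μ - 1 = (-1 : ℝ) by ring]; norm_num
  have hg1cont : ContinuousAt g₁ (-μ) := by
    rw [hg1]
    refine ContinuousAt.sub (ContinuousAt.sub (ContinuousAt.sub ?_ ?_) ?_) hcT.continuousAt
    · exact (continuous_const.mul continuous_id).continuousAt
    · exact ContinuousAt.div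
        (continuous_const.mul ((continuous_id.add continuous_const).sub
          continuous_const)).continuousAt
        (((continuous_id.add continuous_const).sub continuous_const).abs.pow 3).continuousAt
        (pow_ne_zero _ hden1)
    · exact ContinuousAt.div
        (continuous_const.mul ((continuous_id.add continuous_const).sub
          continuous_const)).continuousAt
        (((continuous_id.add continuous_const).sub continuous_const).abs.pow 5).continuousAt
        (pow_ne_zero _ hden1)
  have hden2 : |(1 - μ : ℝ) + μ| ≠ 0 := by
    rw [show (1 - μ : ℝ) + μ = 1 by ring]; norm_num
  have hg2cont : ContinuousAt g₂ (1 - μ) := by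
    rw [hg2]
    refine ContinuousAt.sub (ContinuousAt.sub ?_ ?_) hcT.continuousAt
    · exact (continuous_const.mul continuous_id).continuousAt
    · exact ContinuousAt.div
        (continuous_const.mul (continuous_id.add continuous_const)).continuousAt
        ((continuous_id.add continuous_const).abs.pow 3).continuousAt
        (pow_ne_zero _ hden2)
  -- the singular blow-ups
  have hsq1 : Filter.Tendsto (fun x : ℝ => ((x + μ) ^ 2)⁻¹) (nhdsWithin (-μ) (Set.Ioi (-μ)))
      Filter.atTop := by
    apply tendsto_inv_nhdsGT_zero.comp
    apply tendsto_nhdsWithin_of_tendsto_nhds_of_eventually_within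
    · have h : Filter.Tendsto (fun x : ℝ => (x + μ) ^ 2) (nhds (-μ)) (nhds ((-μ + μ) ^ 2)) :=
        ((continuous_id.add continuous_const).pow 2).continuousAt
      have h' : Filter.Tendsto (fun x : ℝ => (x + μ) ^ 2)
          (nhdsWithin (-μ) (Set.Ioi (-μ))) (nhds ((-μ + μ) ^ 2)) :=
        h.mono_left nhdsWithin_le_nhds
      simpa using h'
    · filter_upwards [self_mem_nhdsWithin] with x hx
      have : (0:ℝ) < x + μ := by have : -μ < x := hx; linarith
      exact pow_pos this 2
  have hsq2 : Filter.Tendsto (fun x : ℝ => ((1 - μ - x) ^ 2)⁻¹)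
      (nhdsWithin (1 - μ) (Set.Iio (1 - μ))) Filter.atTop := by
    apply tendsto_inv_nhdsGT_zero.comp
    apply tendsto_nhdsWithin_of_tendsto_nhds_of_eventually_within
    · have h : Filter.Tendsto (fun x : ℝ => (1 - μ - x) ^ 2) (nhds (1 - μ))
          (nhds ((1 - μ - (1 - μ)) ^ 2)) :=
        ((continuous_const.sub continuous_id).pow 2).continuousAt
      have h' : Filter.Tendsto (fun x : ℝ => (1 - μ - x) ^ 2)
          (nhdsWithin (1 - μ) (Set.Iio (1 - μ))) (nhds ((1 - μ - (1 - μ)) ^ 2)) :=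
        h.mono_left nhdsWithin_le_nhds
      simpa using h'
    · filter_upwards [self_mem_nhdsWithin] with x hx
      have : (0:ℝ) < 1 - μ - x := by have : x < 1 - μ := hx; linarith
      exact pow_pos this 2
  -- tendsto atBot at -μ
  have hbot : Filter.Tendsto (fcol μ q₁ A₂ Mb T n)
      (nhdsWithin (-μ) (Set.Ioi (-μ))) Filter.atBot := by
    have hmain : Filter.Tendsto (fun x : ℝ => -((1 - μ) * q₁) * ((x + μ) ^ 2)⁻¹ + g₁ x)
        (nhdsWithin (-μ) (Set.Ioi (-μ))) Filter.atBot := by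
      refine tendsto_atBot_add_right_of_ge' _ (g₁ (-μ) + 1)
        (hsq1.const_mul_atTop_of_neg (by nlinarith)) ?_
      have ht : Filter.Tendsto g₁ (nhdsWithin (-μ) (Set.Ioi (-μ))) (nhds (g₁ (-μ))) :=
        hg1cont.tendsto.mono_left nhdsWithin_le_nhds
      exact ht.eventually (eventually_le_nhds (lt_add_one _))
    refine hmain.congr' ?_
    filter_upwards [self_mem_nhdsWithin] with x hx
    have hx0 : (0:ℝ) < x + μ := by have : -μ < x := hx; linarith
    have e : (1 - μ) * q₁ * (x + μ) / (x + μ) ^ 3 = (1 - μ) * q₁ * ((x + μ) ^ 2)⁻¹ := by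
      field_simp
    unfold fcol
    rw [abs_of_pos hx0, e, hg1]
    ring
  -- tendsto atTop at 1-μ
  have htop : Filter.Tendsto (fcol μ q₁ A₂ Mb T n)
      (nhdsWithin (1 - μ) (Set.Iio (1 - μ))) Filter.atTop := by
    have hmain : Filter.Tendsto (fun x : ℝ => μ * ((1 - μ - x) ^ 2)⁻¹ + g₂ x)
        (nhdsWithin (1 - μ) (Set.Iio (1 - μ))) Filter.atTop := by
      refine tendsto_atTop_add_right_of_le' _ (g₂ (1 - μ) - 1)
        (hsq2.const_mul_atTop hμ0) ?_
      have ht : Filter.Tendsto g₂ (nhdsWithin (1 - μ) (Set.Iio (1 - μ))) (nhds (g₂ (1 - μ))) :=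
        hg2cont.tendsto.mono_left nhdsWithin_le_nhds
      exact ht.eventually (eventually_ge_nhds (by linarith))
    refine tendsto_atTop_mono' _ ?_ hmain
    filter_upwards [self_mem_nhdsWithin] with x hx
    have hxlt : x < 1 - μ := hx
    have hneg : x + μ - 1 < 0 := by linarith
    have hu : (0:ℝ) < 1 - μ - x := by linarith
    have e1 : μ * (x + μ - 1) / (-(x + μ - 1)) ^ 3 = -(μ * ((1 - μ - x) ^ 2)⁻¹) := by
      rw [show -(x + μ - 1) = 1 - μ - x by ring]
      field_simp
      ring
    have e2 : 3 / 2 * μ * A₂ * (x + μ - 1) / (-(x + μ - 1)) ^ 5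
        = -(3 / 2 * μ * A₂ * ((1 - μ - x) ^ 4)⁻¹) := by
      rw [show -(x + μ - 1) = 1 - μ - x by ring]
      field_simp
      ring
    have hpos : 0 ≤ 3 / 2 * μ * A₂ * ((1 - μ - x) ^ 4)⁻¹ := by positivity
    unfold fcol
    rw [abs_of_neg hneg, e1, e2, hg2]
    simp only
    linarith
  refine ⟨hcont, hbot, htop, ?_⟩
  -- existence of a zero by IVT
  have hm1 : -μ < 1 / 2 - μ := by linarith
  have hm2 : (1:ℝ) / 2 - μ < 1 - μ := by linarith
  have hmemA : Set.Ioo (-μ) (1 / 2 - μ) ∈ nhdsWithin (-μ) (Set.Ioi (-μ)) :=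
    Ioo_mem_nhdsGT_of_mem ⟨le_rfl, hm1⟩
  have hmemB : Set.Ioo (1 / 2 - μ) (1 - μ) ∈ nhdsWithin (1 - μ) (Set.Iio (1 - μ)) :=
    Ioo_mem_nhdsLT_of_mem ⟨hm2, le_rfl⟩
  obtain ⟨a, ha0, haI⟩ :=
    ((hbot.eventually (eventually_lt_atBot 0)).and (eventually_of_mem hmemA fun x hx => hx)).exists
  obtain ⟨b, hb0, hbI⟩ :=
    ((htop.eventually (eventually_gt_atTop 0)).and (eventually_of_mem hmemB fun x hx => hx)).exists
  have hab : a ≤ b := le_of_lt (lt_trans haI.2 hbI.1)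
  have hsub : Set.Icc a b ⊆ Set.Ioo (-μ) (1 - μ) := fun y hy =>
    ⟨lt_of_lt_of_le haI.1 hy.1, lt_of_le_of_lt hy.2 hbI.2⟩
  have hiv := intermediate_value_Icc hab (hcont.mono hsub)
  obtain ⟨x₁, hx₁, hfx₁⟩ := hiv ⟨ha0.le, hb0.le⟩
  exact ⟨x₁, hsub hx₁, hfx₁⟩
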